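/- If a balanced stable system is truncated so that the retained and truncated Hankel singular values are disjoint (σ_r > σ_{r+1}), then the truncated system matrix Ã (the leading r×r block of A) is again Hurwitz stable. -/
import Mathlib
open Matrix

/-- Membership in the spectrum of a complex matrix is equivalent to having an eigenvector. -/
lemma aux_mem_spectrum_iff {n : ℕ} (M : Matrix (Fin n) (Fin n) ℂ) (μ : ℂ) :
    μ ∈ spectrum ℂ M ↔ ∃ v : Fin n → ℂ, v ≠ 0 ∧ M *ᵥ v = μ • v := by
  rw [spectrum.mem_iff, Matrix.isUnit_iff_isUnit_det, isUnit_iff_ne_zero, not_not,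
    ← Matrix.exists_mulVec_eq_zero_iff]
  constructor
  · rintro ⟨v, hv, h⟩
    refine ⟨v, hv, ?_⟩
    rw [Algebra.algebraMap_eq_smul_one, Matrix.sub_mulVec, Matrix.smul_mulVec,
      Matrix.one_mulVec, sub_eq_zero] at h
    exact h.symm
  · rintro ⟨v, hv, h⟩
    refine ⟨v, hv, ?_⟩
    rw [Algebra.algebraMap_eq_smul_one, Matrix.sub_mulVec, Matrix.smul_mulVec,
      Matrix.one_mulVec, sub_eq_zero, h]

/-- A real matrix commutes with complex conjugation of vectors. -/
lemma aux_real_mulVec_star {a b : ℕ} (M : Matrix (Fin a) (Fin b) ℝ) (u : Fin b → ℂ) :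
    (M.map (Complex.ofReal ·)) *ᵥ (star u) = star ((M.map (Complex.ofReal ·)) *ᵥ u) := by
  funext i
  simp only [Matrix.mulVec, dotProduct, Matrix.map_apply, Pi.star_apply]
  rw [show star (∑ j, (M i j : ℂ) * u j) = ∑ j, star ((M i j : ℂ) * u j) from star_sum _ _]
  refine Finset.sum_congr rfl fun j _ => ?_
  simp [Complex.star_def, Complex.conj_ofReal, mul_comm]

/-- Adjoint identity for real matrices acting on complex vectors. -/
lemma aux_adjoint {a b : ℕ} (M : Matrix (Fin a) (Fin b) ℝ) (u : Fin b → ℂ) (z : Fin a → ℂ) :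
    star u ⬝ᵥ ((Mᵀ.map (Complex.ofReal ·)) *ᵥ z) = star ((M.map (Complex.ofReal ·)) *ᵥ u) ⬝ᵥ z := by
  have h : (Mᵀ.map (Complex.ofReal ·)) = (M.map (Complex.ofReal ·))ᵀ := rfl
  rw [h, Matrix.dotProduct_mulVec, Matrix.vecMul_transpose, aux_real_mulVec_star]

/-- Sum over `Fin N` of a function vanishing from index `r` on. -/
lemma aux_sum_top {N r : ℕ} (hr : r ≤ N) (g : Fin N → ℂ)
    (hg : ∀ j : Fin N, r ≤ (j : ℕ) → g j = 0) :
    ∑ j, g j = ∑ j : Fin r, g (Fin.castLE hr j) := by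
  have e1 : ∑ j : Fin N, g j
      = ∑ j : Fin N, (fun i : ℕ => if h : i < N then g ⟨i, h⟩ else 0) (j : ℕ) :=
    Finset.sum_congr rfl (fun j _ => by simp)
  have e2 : ∑ j : Fin r, g (Fin.castLE hr j)
      = ∑ j : Fin r, (fun i : ℕ => if h : i < N then g ⟨i, h⟩ else 0) (j : ℕ) :=
    Finset.sum_congr rfl (fun j _ => by
      have hj : (j : ℕ) < N := lt_of_lt_of_le j.isLt hr
      simp only [dif_pos hj]
      rfl)
  rw [e1, e2, Fin.sum_univ_eq_sum_range (fun i : ℕ => if h : i < N then g ⟨i, h⟩ else 0) N,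
    Fin.sum_univ_eq_sum_range (fun i : ℕ => if h : i < N then g ⟨i, h⟩ else 0) r]
  rw [Finset.sum_subset (Finset.range_subset_range.mpr hr)]
  intro i hi hir
  simp only [Finset.mem_range] at hi hir
  rw [dif_pos hi]
  exact hg _ (le_of_not_gt hir)

/-- If the Hermitian square of a complex vector vanishes, the vector is zero. -/
lemma aux_dot_star_zero {m : ℕ} (w : Fin m → ℂ) (h : star w ⬝ᵥ w = 0) : w = 0 := by
  have hs : ((∑ i, Complex.normSq (w i) : ℝ) : ℂ) = 0 := by
    rw [← h]
    push_cast
    simp only [dotProduct, Pi.star_apply]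
    refine Finset.sum_congr rfl fun i _ => ?_
    rw [Complex.star_def, mul_comm ((starRingEnd ℂ) (w i)) (w i), Complex.mul_conj]
  have hs' : (∑ i, Complex.normSq (w i) : ℝ) = 0 := by exact_mod_cast hs
  have hall := (Finset.sum_eq_zero_iff_of_nonneg
    (fun i _ => Complex.normSq_nonneg (w i))).mp hs'
  funext i
  exact Complex.normSq_eq_zero.mp (hall i (Finset.mem_univ i))

/-- Core spectral argument, carried out over `ℂ`. -/
lemma aux_core {N p q r : ℕ} (hr : r ≤ N)
    (Ac : Matrix (Fin N) (Fin N) ℂ) (Bc : Matrix (Fin N) (Fin p) ℂ)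
    (Lc : Matrix (Fin q) (Fin N) ℂ) (σ : Fin N → ℝ)
    (hσpos : ∀ i, 0 < σ i)
    (hgap : ∀ i j : Fin N, (i : ℕ) < r → r ≤ (j : ℕ) → σ j < σ i)
    (hA1 : ∀ u : Fin N → ℂ, Ac *ᵥ star u = star (Ac *ᵥ u))
    (hA2 : ∀ u : Fin N → ℂ, Acᵀ *ᵥ star u = star (Acᵀ *ᵥ u))
    (hB2 : ∀ u : Fin N → ℂ, Bcᵀ *ᵥ star u = star (Bcᵀ *ᵥ u))
    (hL1 : ∀ u : Fin N → ℂ, Lc *ᵥ star u = star (Lc *ᵥ u))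
    (c₁ : Ac * Matrix.diagonal (fun i => (σ i : ℂ)) + Matrix.diagonal (fun i => (σ i : ℂ)) * Acᵀ
        = -(Bc * Bcᵀ))
    (c₂ : Acᵀ * Matrix.diagonal (fun i => (σ i : ℂ)) + Matrix.diagonal (fun i => (σ i : ℂ)) * Ac
        = -(Lcᵀ * Lc))
    (μ : ℂ) (hre : 0 ≤ μ.re)
    (x : Fin N → ℂ) (hx0 : x ≠ 0)
    (hxTs : ∀ i : Fin N, r ≤ (i : ℕ) → x i = 0)
    (hxEr : ∀ i : Fin N, (i : ℕ) < r → (Ac *ᵥ x) i = μ * x i) :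
    μ ∈ spectrum ℂ Ac := by
  set sc : Fin N → ℂ := fun i => (σ i : ℂ) with hsc
  set Dc : Matrix (Fin N) (Fin N) ℂ := Matrix.diagonal sc with hDcdef
  -- adjoint identities
  have adj1 : ∀ u z : Fin N → ℂ, star u ⬝ᵥ (Acᵀ *ᵥ z) = star (Ac *ᵥ u) ⬝ᵥ z := by
    intro u z
    rw [Matrix.dotProduct_mulVec, Matrix.vecMul_transpose, hA1]
  have adj2 : ∀ u z : Fin N → ℂ, star u ⬝ᵥ (Ac *ᵥ z) = star (Acᵀ *ᵥ u) ⬝ᵥ z := by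
    intro u z
    conv_lhs => rw [Matrix.dotProduct_mulVec, ← Matrix.transpose_transpose Ac,
      Matrix.vecMul_transpose, hA2]
  have adjL : ∀ u z, star u ⬝ᵥ (Lcᵀ *ᵥ z) = star (Lc *ᵥ u) ⬝ᵥ z := by
    intro u z
    rw [Matrix.dotProduct_mulVec, Matrix.vecMul_transpose, hL1]
  have adjB : ∀ u z, star u ⬝ᵥ (Bc *ᵥ z) = star (Bcᵀ *ᵥ u) ⬝ᵥ z := by
    intro u z
    conv_lhs => rw [Matrix.dotProduct_mulVec, ← Matrix.transpose_transpose Bc,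
      Matrix.vecMul_transpose, hB2]
  -- the quadratic identity from the second Lyapunov equation
  have quad : ∀ z : Fin N → ℂ, (∀ i : Fin N, r ≤ (i : ℕ) → z i = 0) →
      (∀ i : Fin N, (i : ℕ) < r → (Ac *ᵥ z) i = μ * z i) →
      ((2 * μ.re : ℝ) : ℂ) * (∑ i, sc i * (star (z i) * z i))
        = -(star (Lc *ᵥ z) ⬝ᵥ (Lc *ᵥ z)) := by
    intro z hTs hEr
    have h0 := congrArg (fun M => star z ⬝ᵥ (M *ᵥ z)) c₂
    simp only [Matrix.add_mulVec, dotProduct_add, ← Matrix.mulVec_mulVec,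
      Matrix.neg_mulVec, dotProduct_neg] at h0
    rw [adj1, adjL] at h0
    have T1 : star (Ac *ᵥ z) ⬝ᵥ (Dc *ᵥ z) = star μ * ∑ i, sc i * (star (z i) * z i) := by
      rw [Finset.mul_sum]
      simp only [dotProduct, hDcdef, Matrix.mulVec_diagonal, Pi.star_apply]
      refine Finset.sum_congr rfl fun i _ => ?_
      rcases lt_or_ge (i : ℕ) r with hi | hi
      · rw [hEr i hi, star_mul']; ring
      · rw [hTs i hi]; simp
    have T2 : star z ⬝ᵥ (Dc *ᵥ (Ac *ᵥ z)) = μ * ∑ i, sc i * (star (z i) * z i) := by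
      rw [Finset.mul_sum]
      simp only [dotProduct, hDcdef, Matrix.mulVec_diagonal, Pi.star_apply]
      refine Finset.sum_congr rfl fun i _ => ?_
      rcases lt_or_ge (i : ℕ) r with hi | hi
      · rw [hEr i hi]; ring
      · rw [hTs i hi]; simp
    rw [T1, T2, ← add_mul] at h0
    have hconj : ((2 * μ.re : ℝ) : ℂ) = star μ + μ := by
      rw [Complex.star_def, add_comm, Complex.add_conj]
    rw [hconj]
    exact h0
  -- real bridges
  have bridge : ∀ z : Fin N → ℂ,
      ∑ i, sc i * (star (z i) * z i) = ((∑ i, σ i * Complex.normSq (z i) : ℝ) : ℂ) := by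
    intro z
    push_cast
    refine Finset.sum_congr rfl fun i _ => ?_
    rw [Complex.star_def, mul_comm ((starRingEnd ℂ) (z i)) (z i), Complex.mul_conj]
  have dstar : ∀ {m : ℕ} (w : Fin m → ℂ),
      star w ⬝ᵥ w = ((∑ i, Complex.normSq (w i) : ℝ) : ℂ) := by
    intro m w
    push_cast
    simp only [dotProduct, Pi.star_apply]
    refine Finset.sum_congr rfl fun i _ => ?_
    rw [Complex.star_def, mul_comm ((starRingEnd ℂ) (w i)) (w i), Complex.mul_conj]
  -- μ is purely imaginary
  have hre0 : μ.re = 0 := by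
    have h := quad x hxTs hxEr
    rw [bridge, dstar] at h
    have hreal : 2 * μ.re * (∑ i, σ i * Complex.normSq (x i))
        = -(∑ i, Complex.normSq ((Lc *ᵥ x) i)) := by
      exact_mod_cast h
    have hQpos : (0 : ℝ) < ∑ i, σ i * Complex.normSq (x i) := by
      refine Finset.sum_pos' (fun i _ => mul_nonneg (hσpos i).le (Complex.normSq_nonneg _)) ?_
      obtain ⟨k, hk⟩ := Function.ne_iff.mp hx0
      exact ⟨k, Finset.mem_univ k, mul_pos (hσpos k) (Complex.normSq_pos.mpr hk)⟩
    have hnL : (0 : ℝ) ≤ ∑ i, Complex.normSq ((Lc *ᵥ x) i) :=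
      Finset.sum_nonneg fun i _ => Complex.normSq_nonneg _
    nlinarith
  -- every admissible vector is in the kernel of L
  have hLz : ∀ z : Fin N → ℂ, (∀ i : Fin N, r ≤ (i : ℕ) → z i = 0) →
      (∀ i : Fin N, (i : ℕ) < r → (Ac *ᵥ z) i = μ * z i) → Lc *ᵥ z = 0 := by
    intro z hTs hEr
    have h := quad z hTs hEr
    rw [hre0] at h
    simp only [mul_zero, Complex.ofReal_zero, zero_mul] at h
    exact aux_dot_star_zero _ (neg_eq_zero.mp h.symm)
  -- μ is purely imaginary as a complex number
  have hμconj : star μ = -μ := by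
    rw [Complex.star_def]
    have h1 : μ + (starRingEnd ℂ) μ = ((2 * μ.re : ℝ) : ℂ) := Complex.add_conj μ
    rw [hre0] at h1
    simp only [mul_zero, Complex.ofReal_zero] at h1
    linear_combination h1
  -- consequence of the second Lyapunov equation as a full vector identity
  have hstep2 : ∀ z : Fin N → ℂ, (∀ i : Fin N, r ≤ (i : ℕ) → z i = 0) →
      (∀ i : Fin N, (i : ℕ) < r → (Ac *ᵥ z) i = μ * z i) →
      Acᵀ *ᵥ (Dc *ᵥ z) = -(Dc *ᵥ (Ac *ᵥ z)) := by
    intro z hTs hEr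
    have h := congrArg (fun M => M *ᵥ z) c₂
    simp only [Matrix.add_mulVec, ← Matrix.mulVec_mulVec, Matrix.neg_mulVec] at h
    rw [hLz z hTs hEr, Matrix.mulVec_zero, neg_zero] at h
    exact eq_neg_of_add_eq_zero_left h
  -- B annihilates Dc ∙ z
  have hBy : ∀ z : Fin N → ℂ, (∀ i : Fin N, r ≤ (i : ℕ) → z i = 0) →
      (∀ i : Fin N, (i : ℕ) < r → (Ac *ᵥ z) i = μ * z i) →
      Bcᵀ *ᵥ (Dc *ᵥ z) = 0 := by
    intro z hTs hEr
    have h0 := congrArg (fun M => star (Dc *ᵥ z) ⬝ᵥ (M *ᵥ (Dc *ᵥ z))) c₁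
    simp only [Matrix.add_mulVec, dotProduct_add, ← Matrix.mulVec_mulVec,
      Matrix.neg_mulVec, dotProduct_neg] at h0
    rw [adj2, adjB, hstep2 z hTs hEr] at h0
    have hLHS : star (-(Dc *ᵥ (Ac *ᵥ z))) ⬝ᵥ (Dc *ᵥ (Dc *ᵥ z))
        + star (Dc *ᵥ z) ⬝ᵥ (Dc *ᵥ (-(Dc *ᵥ (Ac *ᵥ z)))) = 0 := by
      simp only [dotProduct, hDcdef, Matrix.mulVec_diagonal, Pi.star_apply,
        Pi.neg_apply, star_neg, star_mul', Complex.star_def, Complex.conj_ofReal]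
      rw [← Finset.sum_add_distrib]
      refine Finset.sum_eq_zero fun i _ => ?_
      rcases lt_or_ge (i : ℕ) r with hi | hi
      · rw [hEr i hi]
        have hμ' : (starRingEnd ℂ) μ = -μ := by rw [← Complex.star_def]; exact hμconj
        simp only [star_mul', Complex.conj_ofReal, hμ', _root_.map_mul]
        ring
      · rw [hTs i hi]
        simp
    rw [hLHS] at h0
    exact aux_dot_star_zero _ (neg_eq_zero.mp h0.symm)
  -- the commutation identity
  have hcomm : ∀ z : Fin N → ℂ, (∀ i : Fin N, r ≤ (i : ℕ) → z i = 0) →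
      (∀ i : Fin N, (i : ℕ) < r → (Ac *ᵥ z) i = μ * z i) →
      Ac *ᵥ (Dc *ᵥ (Dc *ᵥ z)) = Dc *ᵥ (Dc *ᵥ (Ac *ᵥ z)) := by
    intro z hTs hEr
    have h := congrArg (fun M => M *ᵥ (Dc *ᵥ z)) c₁
    simp only [Matrix.add_mulVec, ← Matrix.mulVec_mulVec, Matrix.neg_mulVec] at h
    rw [hBy z hTs hEr, Matrix.mulVec_zero, neg_zero, hstep2 z hTs hEr,
      Matrix.mulVec_neg] at h
    have h' := eq_neg_of_add_eq_zero_left h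
    rw [h', neg_neg]
  -- closure of the admissible subspace under Dc²
  have hclose : ∀ z : Fin N → ℂ, (∀ i : Fin N, r ≤ (i : ℕ) → z i = 0) →
      (∀ i : Fin N, (i : ℕ) < r → (Ac *ᵥ z) i = μ * z i) →
      (∀ i : Fin N, r ≤ (i : ℕ) → (Dc *ᵥ (Dc *ᵥ z)) i = 0) ∧
      (∀ i : Fin N, (i : ℕ) < r → (Ac *ᵥ (Dc *ᵥ (Dc *ᵥ z))) i = μ * (Dc *ᵥ (Dc *ᵥ z)) i) := by
    intro z hTs hEr
    constructor
    · intro i hi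
      simp only [hDcdef, Matrix.mulVec_diagonal, hTs i hi, mul_zero]
    · intro i hi
      rw [hcomm z hTs hEr]
      simp only [hDcdef, Matrix.mulVec_diagonal]
      rw [hEr i hi]
      ring
  -- the admissible subspace as a submodule
  let V : Submodule ℂ (Fin N → ℂ) :=
    { carrier := {z | (∀ i : Fin N, r ≤ (i : ℕ) → z i = 0) ∧
        ∀ i : Fin N, (i : ℕ) < r → (Ac *ᵥ z) i = μ * z i}
      add_mem' := by
        rintro a b ⟨ha1, ha2⟩ ⟨hb1, hb2⟩
        constructor
        · intro i hi
          simp only [Pi.add_apply, ha1 i hi, hb1 i hi, add_zero]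
        · intro i hi
          rw [Matrix.mulVec_add]
          simp only [Pi.add_apply]
          rw [ha2 i hi, hb2 i hi]
          ring
      zero_mem' := by
        constructor
        · intro i _; rfl
        · intro i _
          simp [Matrix.mulVec_zero]
      smul_mem' := by
        rintro c a ⟨h1, h2⟩
        constructor
        · intro i hi
          simp only [Pi.smul_apply, h1 i hi, smul_zero]
        · intro i hi
          rw [Matrix.mulVec_smul]
          simp only [Pi.smul_apply, smul_eq_mul]
          rw [h2 i hi]
          ring }
  have hmemV : ∀ z : Fin N → ℂ, z ∈ V ↔ ((∀ i : Fin N, r ≤ (i : ℕ) → z i = 0) ∧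
      ∀ i : Fin N, (i : ℕ) < r → (Ac *ᵥ z) i = μ * z i) := fun z => Iff.rfl
  -- the squared-diagonal linear map restricted to V
  have hmaps : ∀ z ∈ V, (Dc * Dc).mulVecLin z ∈ V := by
    intro z hz
    obtain ⟨h1, h2⟩ := (hmemV z).mp hz
    have hDD : (Dc * Dc).mulVecLin z = Dc *ᵥ (Dc *ᵥ z) := by
      rw [Matrix.mulVecLin_apply, ← Matrix.mulVec_mulVec]
    rw [hmemV, hDD]
    exact ⟨(hclose z h1 h2).1, (hclose z h1 h2).2⟩
  have hxV : x ∈ V := (hmemV x).mpr ⟨hxTs, hxEr⟩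
  haveI : Nontrivial V := by
    refine nontrivial_of_ne (⟨x, hxV⟩ : V) 0 ?_
    intro h
    exact hx0 (by simpa using congrArg Subtype.val h)
  obtain ⟨c, hc⟩ := Module.End.exists_eigenvalue
    ((Matrix.mulVecLin (Dc * Dc)).restrict hmaps : Module.End ℂ V)
  obtain ⟨z₀, hz₀⟩ := hc.exists_hasEigenvector
  obtain ⟨hTs₀, hEr₀⟩ := (hmemV _).mp z₀.2
  have hz₀ne : (z₀ : Fin N → ℂ) ≠ 0 := by
    intro h
    exact hz₀.2 (Subtype.ext h)
  have hz0eq : ∀ i, sc i * (sc i * (z₀ : Fin N → ℂ) i) = c * (z₀ : Fin N → ℂ) i := by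
    have h := Module.End.mem_eigenspace_iff.mp hz₀.1
    have h2 := congrArg Subtype.val h
    rw [LinearMap.restrict_apply] at h2
    intro i
    have h3 := congrFun h2 i
    simp only [Matrix.mulVecLin_apply, ← Matrix.mulVec_mulVec, hDcdef,
      Matrix.mulVec_diagonal, Submodule.coe_smul, Pi.smul_apply, smul_eq_mul] at h3
    exact h3
  obtain ⟨k, hk⟩ := Function.ne_iff.mp hz₀ne
  have hkr : (k : ℕ) < r := lt_of_not_ge fun h => hk (hTs₀ k h)
  have hc_eq : c = sc k * sc k := by
    have h := hz0eq k
    have h' : (sc k * sc k) * (z₀ : Fin N → ℂ) k = c * (z₀ : Fin N → ℂ) k := by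
      rw [mul_assoc]; exact h
    exact (mul_right_cancel₀ hk h').symm
  have hDz : Dc *ᵥ (Dc *ᵥ (z₀ : Fin N → ℂ)) = c • (z₀ : Fin N → ℂ) := by
    funext i
    simp only [hDcdef, Matrix.mulVec_diagonal, Pi.smul_apply, smul_eq_mul]
    exact hz0eq i
  have heig : Ac *ᵥ (z₀ : Fin N → ℂ) = μ • (z₀ : Fin N → ℂ) := by
    funext j
    rcases lt_or_ge (j : ℕ) r with hj | hj
    · rw [Pi.smul_apply, smul_eq_mul]
      exact hEr₀ j hj
    · have h2 := congrFun (hcomm _ hTs₀ hEr₀) j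
      rw [hDz, Matrix.mulVec_smul] at h2
      simp only [Pi.smul_apply, smul_eq_mul, hDcdef, Matrix.mulVec_diagonal] at h2
      have h1 : (Ac *ᵥ (z₀ : Fin N → ℂ)) j * (c - sc j * sc j) = 0 := by
        linear_combination h2
      have hcne : c - sc j * sc j ≠ 0 := by
        rw [hc_eq]
        intro h
        have hC : (σ k : ℂ) * σ k = (σ j : ℂ) * σ j := by linear_combination h
        have hR : σ k * σ k = σ j * σ j := by exact_mod_cast hC
        have hlt := hgap k j hkr hj
        nlinarith [hσpos j, hσpos k]
      have hAz : (Ac *ᵥ (z₀ : Fin N → ℂ)) j = 0 := by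
        rcases mul_eq_zero.mp h1 with h | h
        · exact h
        · exact absurd h hcne
      rw [hAz, Pi.smul_apply, smul_eq_mul, hTs₀ j hj, mul_zero]
  exact (aux_mem_spectrum_iff Ac μ).mpr ⟨(z₀ : Fin N → ℂ), hz₀ne, heig⟩


/-- Stability of the balanced-truncated system: if a balanced Hurwitz-stable system is
truncated so that the retained and truncated Hankel singular values are disjoint
(`σ_r > σ_{r+1}`), then the leading `r × r` block of `A` is again Hurwitz stable. -/
theorem balanced_truncation_stable {N p q : ℕ}
    (A : Matrix (Fin N) (Fin N) ℝ)
    (B : Matrix (Fin N) (Fin p) ℝ) (L : Matrix (Fin q) (Fin N) ℝ)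
    (hA : ∀ μ ∈ spectrum ℂ (A.map (Complex.ofReal · )), μ.re < 0)
    (σ : Fin N → ℝ)
    (hσpos : ∀ i, 0 < σ i) (hσmono : ∀ i j : Fin N, i ≤ j → σ j ≤ σ i)
    (hbal₁ : A * Matrix.diagonal σ + Matrix.diagonal σ * Aᵀ = -(B * Bᵀ))
    (hbal₂ : Aᵀ * Matrix.diagonal σ + Matrix.diagonal σ * A = -(Lᵀ * L))
    (r : ℕ) (hr : r ≤ N)
    (hgap : ∀ i j : Fin N, (i : ℕ) < r → r ≤ (j : ℕ) → σ j < σ i) :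
    ∀ μ ∈ spectrum ℂ ((A.submatrix (Fin.castLE hr) (Fin.castLE hr)).map (Complex.ofReal · )),
      μ.re < 0 := by
  intro μ hμ
  by_contra hre
  push_neg at hre
  -- extract an eigenvector of the truncated matrix
  have hμ' : μ ∈ spectrum ℂ
      ((A.map (Complex.ofReal ·)).submatrix (Fin.castLE hr) (Fin.castLE hr)) := hμ
  obtain ⟨v, hv0, hveig⟩ := (aux_mem_spectrum_iff _ μ).mp hμ'
  -- extend it by zero
  set x : Fin N → ℂ := fun i => if h : (i : ℕ) < r then v ⟨i, h⟩ else 0 with hxdef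
  have hxTs : ∀ i : Fin N, r ≤ (i : ℕ) → x i = 0 := fun i hi => dif_neg (not_lt.mpr hi)
  have hxval : ∀ j : Fin r, x (Fin.castLE hr j) = v j := by
    intro j
    simp only [hxdef]
    rw [dif_pos (show ((Fin.castLE hr j : Fin N) : ℕ) < r from j.isLt)]
    exact congrArg v (Fin.ext rfl)
  have hxEr : ∀ i : Fin N, (i : ℕ) < r →
      ((A.map (Complex.ofReal ·)) *ᵥ x) i = μ * x i := by
    intro i hi
    have hsum : ((A.map (Complex.ofReal ·)) *ᵥ x) i
        = ∑ j : Fin r, (A.map (Complex.ofReal ·)) i (Fin.castLE hr j) * x (Fin.castLE hr j) := by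
      exact aux_sum_top hr _ (fun j hj => by rw [hxTs j hj, mul_zero])
    have hi' : Fin.castLE hr ⟨(i : ℕ), hi⟩ = i := Fin.ext rfl
    have hcomp : ∑ j : Fin r, (A.map (Complex.ofReal ·)) (Fin.castLE hr ⟨(i : ℕ), hi⟩)
        (Fin.castLE hr j) * v j = μ * v ⟨(i : ℕ), hi⟩ := by
      have h := congrFun hveig ⟨(i : ℕ), hi⟩
      simpa [Matrix.mulVec, dotProduct, Matrix.submatrix_apply, Pi.smul_apply,
        smul_eq_mul] using h
    rw [hsum]
    calc ∑ j : Fin r, (A.map (Complex.ofReal ·)) i (Fin.castLE hr j) * x (Fin.castLE hr j)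
        = ∑ j : Fin r, (A.map (Complex.ofReal ·)) (Fin.castLE hr ⟨(i : ℕ), hi⟩)
            (Fin.castLE hr j) * v j := by
          refine Finset.sum_congr rfl fun j _ => ?_
          rw [hi', hxval j]
      _ = μ * v ⟨(i : ℕ), hi⟩ := hcomp
      _ = μ * x i := by
          congr 1
          rw [show x i = v ⟨(i : ℕ), hi⟩ from dif_pos hi]
  have hx0 : x ≠ 0 := by
    obtain ⟨k, hk⟩ := Function.ne_iff.mp hv0
    intro h
    apply hk
    have h2 := congrFun h (Fin.castLE hr k)
    rw [hxval k] at h2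
    simpa using h2
  -- the complexified Lyapunov equations
  have c₁ : (A.map (Complex.ofReal ·)) * Matrix.diagonal (fun i => (σ i : ℂ))
      + Matrix.diagonal (fun i => (σ i : ℂ)) * (A.map (Complex.ofReal ·))ᵀ
      = -((B.map (Complex.ofReal ·)) * (B.map (Complex.ofReal ·))ᵀ) := by
    ext i j
    have h := congrFun (congrFun hbal₁ i) j
    simp only [Matrix.add_apply, Matrix.neg_apply, Matrix.mul_diagonal,
      Matrix.diagonal_mul, Matrix.transpose_apply, Matrix.map_apply] at h ⊢
    simp only [Matrix.mul_apply, Matrix.transpose_apply, Matrix.map_apply] at h ⊢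
    push_cast
    exact_mod_cast h
  have c₂ : (A.map (Complex.ofReal ·))ᵀ * Matrix.diagonal (fun i => (σ i : ℂ))
      + Matrix.diagonal (fun i => (σ i : ℂ)) * (A.map (Complex.ofReal ·))
      = -((L.map (Complex.ofReal ·))ᵀ * (L.map (Complex.ofReal ·))) := by
    ext i j
    have h := congrFun (congrFun hbal₂ i) j
    simp only [Matrix.add_apply, Matrix.neg_apply, Matrix.mul_diagonal,
      Matrix.diagonal_mul, Matrix.transpose_apply, Matrix.map_apply] at h ⊢
    simp only [Matrix.mul_apply, Matrix.transpose_apply, Matrix.map_apply] at h ⊢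
    push_cast
    exact_mod_cast h
  have hmem : μ ∈ spectrum ℂ (A.map (Complex.ofReal ·)) := by
    refine aux_core hr (A.map (Complex.ofReal ·)) (B.map (Complex.ofReal ·))
      (L.map (Complex.ofReal ·)) σ hσpos hgap ?_ ?_ ?_ ?_ c₁ c₂ μ hre x hx0 hxTs hxEr
    · intro u; exact aux_real_mulVec_star A u
    · intro u; exact aux_real_mulVec_star Aᵀ u
    · intro u; exact aux_real_mulVec_star Bᵀ u
    · intro u; exact aux_real_mulVec_star L u
  exact absurd (hA μ hmem) (not_lt.mpr hre)
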